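/- With Φ_k as above, writing Φ_k* : ℝ^{2k} → ℝ^{2k} for Φ_k in real coordinates, the Jacobian determinant det(DΦ_k*(Re w, Im w)) is nonzero at every point w ∈ ℂ^k such that all w_i ≠ 0 and all w_i are pairwise distinct arguments (i.e. w_i ≠ w_j for i ≠ j after normalization |w_i| ≠ 0, and the arguments θ_i are pairwise distinct). -/

import Mathlib

/-- The map `Φ_k : ℂ^k → ℂ^k` whose `j`-th component (`j = 1, …, k`) is
`Σ_{i=1}^k |w_i|^{1-j} w_i^j`, with the convention that a term vanishes when
`w_i = 0`. -/
noncomputable def PhiMap (k : ℕ) (w : Fin k → ℂ) : Fin k → ℂ := fun j =>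
  ∑ i, if w i = 0 then 0 else
    ((‖w i‖ : ℂ)) ^ ((1 : ℤ) - (((j : ℕ) : ℤ) + 1)) * w i ^ ((j : ℕ) + 1)

open Polynomial Finset Complex

lemma reflect_prod_aux {ι : Type*} (s : Finset ι) (u : ι → ℂ) (hu : ∀ i, ‖u i‖ = 1) :
    reflect s.card (∏ i ∈ s, (X - C (u i))) =
      C (∏ i ∈ s, (-(u i))) * ∏ i ∈ s, (X - C ((starRingEnd ℂ) (u i))) := by
  induction s using Finset.cons_induction with
  | empty => simp [reflect_one]
  | cons a s ha ih =>
    have hdeg : (∏ i ∈ s, (X - C (u i))).natDegree ≤ s.card := by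
      refine le_trans (natDegree_prod_le _ _) ?_
      refine le_trans (Finset.sum_le_card_nsmul _ _ 1 ?_) (by simp)
      intro i _; exact (natDegree_X_sub_C_le _)
    rw [Finset.prod_cons, Finset.prod_cons, Finset.prod_cons, Finset.card_cons,
      add_comm s.card 1, reflect_mul (X - C (u a)) _ (natDegree_X_sub_C_le _) hdeg, ih]
    have h1 : reflect 1 (X - C (u a)) = C (-(u a)) * (X - C ((starRingEnd ℂ) (u a))) := by
      have : u a * (starRingEnd ℂ) (u a) = 1 := by
        rw [Complex.mul_conj]; norm_cast
        rw [Complex.normSq_eq_norm_sq, hu a]; norm_num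
      rw [reflect_sub, reflect_C]
      rw [reflect_one_X, mul_sub, ← C_mul, neg_mul, this]
      simp only [map_neg, map_one]
      ring
    rw [h1, mul_mul_mul_comm, ← C_mul]

lemma coeff_sq_ne_zero {k : ℕ} (u : Fin k → ℂ) (hu : ∀ i, ‖u i‖ = 1) :
    ((∏ i, (X - C (u i))) ^ 2).coeff k ≠ 0 := by
  have hu0 : ∀ i, u i ≠ 0 := fun i => by
    intro h; have := hu i; rw [h] at this; simp at this
  set Q := ∏ i, (X - C (u i)) with hQ
  have hmonic : Q.Monic := monic_prod_of_monic _ _ fun i _ => monic_X_sub_C _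
  have hdeg : Q.natDegree = k := by
    rw [hQ, natDegree_prod _ _ (fun i _ => X_sub_C_ne_zero _)]
    simp
  have hrefl := reflect_prod_aux Finset.univ u hu
  simp only [Finset.card_univ, Fintype.card_fin] at hrefl
  have hmap : ∏ i : Fin k, (X - C ((starRingEnd ℂ) (u i))) = Q.map (starRingEnd ℂ) := by
    rw [hQ, Polynomial.map_prod]
    simp
  rw [hmap] at hrefl
  have hcoeff : ∀ j ≤ k, Q.coeff (k - j) =
      (∏ i, (-(u i))) * (starRingEnd ℂ) (Q.coeff j) := by
    intro j hj
    have h2 := congrArg (fun p => p.coeff j) hrefl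
    simp only [coeff_reflect, revAt_le hj, coeff_C_mul, coeff_map] at h2
    exact h2
  have hsum : (Q ^ 2).coeff k =
      (∏ i, (-(u i))) * ((∑ j ∈ Finset.range (k + 1), Complex.normSq (Q.coeff j) : ℝ) : ℂ) := by
    rw [sq, coeff_mul, Finset.Nat.sum_antidiagonal_eq_sum_range_succ_mk]
    push_cast
    rw [Finset.mul_sum]
    refine Finset.sum_congr rfl fun j hj => ?_
    rw [hcoeff j (Nat.lt_succ_iff.mp (Finset.mem_range.mp hj))]
    rw [mul_left_comm, Complex.mul_conj]
  rw [hsum]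
  apply mul_ne_zero
  · exact Finset.prod_ne_zero_iff.mpr fun i _ => neg_ne_zero.mpr (hu0 i)
  · rw [Complex.ofReal_ne_zero]
    have hpos : (0:ℝ) < ∑ j ∈ Finset.range (k + 1), Complex.normSq (Q.coeff j) := by
      apply Finset.sum_pos' (fun j _ => Complex.normSq_nonneg _)
      refine ⟨k, Finset.self_mem_range_succ k, ?_⟩
      have : Q.coeff k = 1 := by
        have := hmonic.coeff_natDegree
        rwa [hdeg] at this
      rw [this]; norm_num
    exact ne_of_gt hpos

lemma key_lin {k : ℕ} (u : Fin k → ℂ) (hu : ∀ i, ‖u i‖ = 1) (hinj : Function.Injective u)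
    (A B : Fin k → ℂ)
    (hvan : ∀ n : ℕ, n ≤ 2 * k → n ≠ k →
      ∑ i, (A i * u i ^ n + B i * n * u i ^ (n - 1)) = 0) :
    ∀ i, A i = 0 ∧ B i = 0 := by
  classical
  set σ : Fin (2 * k) → ℕ := fun n => if (n : ℕ) < k then (n : ℕ) else (n : ℕ) + 1 with hσ
  have hσle : ∀ n, σ n ≤ 2 * k := by
    intro n; have := n.2; by_cases h : (n : ℕ) < k <;> simp [hσ, h] <;> omega
  have hσne : ∀ n, σ n ≠ k := by
    intro n; by_cases h : (n : ℕ) < k <;> simp [hσ, h] <;> omega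
  have hσinj : Function.Injective σ := by
    intro a b hab
    have ha := a.2; have hb := b.2
    by_cases h1 : (a:ℕ) < k <;> by_cases h2 : (b:ℕ) < k <;>
      simp [hσ, h1, h2] at hab <;> [skip; omega; omega; skip] <;> exact Fin.ext (by omega)
  -- the polynomial associated to a coefficient vector
  set poly : (Fin (2 * k) → ℂ) →ₗ[ℂ] Polynomial ℂ :=
    { toFun := fun c => ∑ n, C (c n) * X ^ σ n
      map_add' := by intro a b; simp [add_mul, Finset.sum_add_distrib]
      map_smul' := by
        intro m a; simp [Finset.smul_sum, smul_eq_C_mul, mul_assoc] } with hpoly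
  set T : (Fin (2 * k) → ℂ) →ₗ[ℂ] (Fin k → ℂ) × (Fin k → ℂ) :=
    LinearMap.prod
      (LinearMap.pi fun i => (Polynomial.leval (u i)).comp poly)
      (LinearMap.pi fun i => (Polynomial.leval (u i)).comp (Polynomial.derivative.comp poly))
    with hT
  have hTapp1 : ∀ c i, (T c).1 i = (poly c).eval (u i) := fun c i => rfl
  have hTapp2 : ∀ c i, (T c).2 i = (Polynomial.derivative (poly c)).eval (u i) := fun c i => rfl
  -- coefficients of poly c
  have hcoeffσ : ∀ c n, (poly c).coeff (σ n) = c n := by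
    intro c n
    simp only [hpoly, LinearMap.coe_mk, AddHom.coe_mk, finset_sum_coeff, coeff_C_mul, coeff_X_pow]
    rw [Finset.sum_eq_single n]
    · simp
    · intro m _ hm
      have : σ n ≠ σ m := fun h => hm (hσinj h.symm)
      simp [this]
    · simp
  have hcoeffk : ∀ c, (poly c).coeff k = 0 := by
    intro c
    simp only [hpoly, LinearMap.coe_mk, AddHom.coe_mk, finset_sum_coeff, coeff_C_mul, coeff_X_pow]
    apply Finset.sum_eq_zero
    intro n _
    simp [Ne.symm (hσne n)]
  -- injectivity of T
  have hTinj : Function.Injective T := by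
    rw [← LinearMap.ker_eq_bot, LinearMap.ker_eq_bot']
    intro c hc
    have hev : ∀ i, (poly c).eval (u i) = 0 ∧ (Polynomial.derivative (poly c)).eval (u i) = 0 := by
      intro i
      constructor
      · rw [← hTapp1 c i, hc]; rfl
      · rw [← hTapp2 c i, hc]; rfl
    have hdvd : ∀ i : Fin k, (X - C (u i)) ^ 2 ∣ poly c := by
      intro i
      obtain ⟨h1, h2⟩ := hev i
      obtain ⟨q1, hq1⟩ := (dvd_iff_isRoot.mpr h1)
      have hder : Polynomial.derivative (poly c) =
          q1 + (X - C (u i)) * Polynomial.derivative q1 := by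
        rw [hq1, derivative_mul]; simp
      have hq1r : q1.eval (u i) = 0 := by
        have := h2
        rw [hder] at this
        simpa using this
      obtain ⟨q2, hq2⟩ := (dvd_iff_isRoot.mpr hq1r)
      exact ⟨q2, by rw [hq1, hq2]; ring⟩
    have hproddvd : (∏ i, (X - C (u i)) ^ 2) ∣ poly c := by
      apply Finset.prod_dvd_of_coprime
      · intro i _ j _ hij
        exact ((pairwise_coprime_X_sub_C hinj hij).pow)
      · intro i _; exact hdvd i
    have hqz : poly c = 0 := by
      by_contra hq0
      obtain ⟨s, hs⟩ := hproddvd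
      have hs0 : s ≠ 0 := by rintro rfl; simp at hs; exact hq0 hs
      have hprodne : (∏ i : Fin k, (X - C (u i)) ^ 2) ≠ 0 := by
        apply Finset.prod_ne_zero_iff.mpr
        intro i _; exact pow_ne_zero _ (X_sub_C_ne_zero _)
      have hdegprod : (∏ i : Fin k, (X - C (u i)) ^ 2).natDegree = 2 * k := by
        rw [natDegree_prod _ _ (fun i _ => pow_ne_zero _ (X_sub_C_ne_zero _))]
        simp [natDegree_pow, mul_comm]
      have hdegq : (poly c).natDegree ≤ 2 * k := by
        simp only [hpoly, LinearMap.coe_mk, AddHom.coe_mk]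
        apply Polynomial.natDegree_sum_le_of_forall_le
        intro n _
        exact le_trans (natDegree_C_mul_le _ _) (by simpa using hσle n)
      have hdegs : s.natDegree = 0 := by
        have := natDegree_mul hprodne hs0
        rw [← hs, hdegprod] at this
        omega
      obtain ⟨t, rfl⟩ : ∃ t, s = C t := ⟨s.coeff 0, eq_C_of_natDegree_eq_zero hdegs⟩
      have hck : (poly c).coeff k = t * ((∏ i : Fin k, (X - C (u i))) ^ 2).coeff k := by
        rw [hs, ← Finset.prod_pow]
        rw [mul_comm, coeff_C_mul]
      have ht : t = 0 := by
        have h1 := hcoeffk c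
        rw [hck] at h1
        rcases mul_eq_zero.mp h1 with h | h
        · exact h
        · exact absurd h (coeff_sq_ne_zero u hu)
      rw [ht] at hs
      simp at hs
      exact hq0 hs
    funext n
    have := hcoeffσ c n
    rw [hqz] at this
    simpa using this.symm
  -- surjectivity of T
  have hfr : Module.finrank ℂ (Fin (2 * k) → ℂ) =
      Module.finrank ℂ ((Fin k → ℂ) × (Fin k → ℂ)) := by
    simp [two_mul]
  have hTsurj : Function.Surjective T := by
    exact (LinearMap.injective_iff_surjective_of_finrank_eq_finrank hfr).mp hTinj
  -- the functional vanishes on the range of T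
  have hFT : ∀ c : Fin (2 * k) → ℂ,
      ∑ i, (A i * (T c).1 i + B i * (T c).2 i) = 0 := by
    intro c
    have hexp : ∀ i, (T c).1 i = ∑ n, c n * u i ^ σ n := by
      intro i
      rw [hTapp1]
      simp [hpoly, eval_finset_sum]
    have hexp2 : ∀ i, (T c).2 i = ∑ n, c n * (σ n : ℂ) * u i ^ (σ n - 1) := by
      intro i
      rw [hTapp2]
      simp only [hpoly, LinearMap.coe_mk, AddHom.coe_mk, derivative_sum, derivative_C_mul,
        derivative_X_pow, eval_finset_sum]
      refine Finset.sum_congr rfl fun n _ => ?_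
      simp; ring
    calc ∑ i, (A i * (T c).1 i + B i * (T c).2 i)
        = ∑ i, ∑ n, c n * (A i * u i ^ σ n + B i * (σ n : ℂ) * u i ^ (σ n - 1)) := by
          refine Finset.sum_congr rfl fun i _ => ?_
          rw [hexp, hexp2, Finset.mul_sum, Finset.mul_sum, ← Finset.sum_add_distrib]
          refine Finset.sum_congr rfl fun n _ => ?_
          ring
      _ = ∑ n, c n * ∑ i, (A i * u i ^ σ n + B i * (σ n : ℂ) * u i ^ (σ n - 1)) := by
          rw [Finset.sum_comm]
          refine Finset.sum_congr rfl fun n _ => ?_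
          rw [Finset.mul_sum]
      _ = 0 := by
          apply Finset.sum_eq_zero
          intro n _
          rw [hvan (σ n) (hσle n) (hσne n), mul_zero]
  intro j
  constructor
  · obtain ⟨c, hc⟩ := hTsurj (Pi.single j 1, 0)
    have := hFT c
    rw [hc] at this
    simpa [Pi.single_apply] using this
  · obtain ⟨c, hc⟩ := hTsurj (0, Pi.single j 1)
    have := hFT c
    rw [hc] at this
    simpa [Pi.single_apply] using this

noncomputable def ipCLM (z : ℂ) : ℂ →L[ℝ] ℝ := z.re • Complex.reCLM + z.im • Complex.imCLM

lemma hasFDerivAt_cnorm (z : ℂ) (hz : z ≠ 0) :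
    HasFDerivAt (fun y : ℂ => ‖y‖) (‖z‖⁻¹ • ipCLM z) z := by
  have hns : HasFDerivAt Complex.normSq ((2:ℝ) • ipCLM z) z := by
    have h1 : HasFDerivAt (fun y : ℂ => y.re * y.re + y.im * y.im)
        ((2:ℝ) • ipCLM z) z := by
      have := ((Complex.reCLM.hasFDerivAt (x := z)).fun_mul
        (Complex.reCLM.hasFDerivAt (x := z))).fun_add
        ((Complex.imCLM.hasFDerivAt (x := z)).fun_mul (Complex.imCLM.hasFDerivAt (x := z)))
      refine this.congr_fderiv ?_
      ext v
      simp [ipCLM]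
      ring
    exact h1.congr_of_eventuallyEq (Filter.Eventually.of_forall fun y => (Complex.normSq_apply y))
  have hnsne : Complex.normSq z ≠ 0 := by
    simpa using hz
  have h2 : HasFDerivAt (fun y : ℂ => Real.sqrt (Complex.normSq y))
      ((1 / (2 * Real.sqrt (Complex.normSq z))) • ((2:ℝ) • ipCLM z)) z :=
    (Real.hasDerivAt_sqrt hnsne).comp_hasFDerivAt z hns
  have heq : (fun y : ℂ => Real.sqrt (Complex.normSq y)) = fun y : ℂ => ‖y‖ := by
    funext y
    rw [Complex.norm_def]
  rw [heq] at h2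
  convert h2 using 1
  rw [smul_smul]
  congr 1
  rw [show Real.sqrt (Complex.normSq z) = ‖z‖ by rw [Complex.norm_def]]
  have : ‖z‖ ≠ 0 := norm_ne_zero_iff.mpr hz
  field_simp

lemma gdiff (m : ℕ) (z : ℂ) (hz : z ≠ 0) :
    ∃ D : ℂ →L[ℝ] ℂ,
      HasFDerivAt (fun y : ℂ => ((‖y‖ : ℂ)) ^ ((1 : ℤ) - ((m : ℤ) + 1)) * y ^ (m + 1)) D z ∧
      ∀ v : ℂ, D v =
        ((((starRingEnd ℂ) (z / ‖z‖) * v).re : ℂ)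
          + Complex.I * ((m : ℂ) + 1) * (((starRingEnd ℂ) (z / ‖z‖) * v).im : ℂ))
          * (z / ‖z‖) ^ (m + 1) := by
  have hr0 : ‖z‖ ≠ 0 := norm_ne_zero_iff.mpr hz
  have hrC : ((‖z‖ : ℝ) : ℂ) ≠ 0 := by exact_mod_cast hr0
  set e : ℤ := (1 : ℤ) - ((m : ℤ) + 1) with he
  have hee : e = -(m : ℤ) := by omega
  -- derivative of y ↦ (‖y‖ : ℂ)
  have hn : HasFDerivAt (fun y : ℂ => ((‖y‖ : ℝ) : ℂ))
      (Complex.ofRealCLM.comp (‖z‖⁻¹ • ipCLM z)) z :=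
    Complex.ofRealCLM.hasFDerivAt.comp z (hasFDerivAt_cnorm z hz)
  -- derivative of x ↦ x ^ e at (‖z‖ : ℂ)
  have hzp : HasFDerivAt (fun x : ℂ => x ^ e)
      ((ContinuousLinearMap.smulRight (1 : ℂ →L[ℂ] ℂ)
        ((e : ℂ) * ((‖z‖ : ℂ)) ^ (e - 1))).restrictScalars ℝ) ((‖z‖ : ℂ)) :=
    ((hasDerivAt_zpow e ((‖z‖ : ℂ)) (Or.inl hrC)).hasFDerivAt).restrictScalars ℝ
  have hcomp : HasFDerivAt (fun y : ℂ => ((‖y‖ : ℂ)) ^ e)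
      (((ContinuousLinearMap.smulRight (1 : ℂ →L[ℂ] ℂ)
        ((e : ℂ) * ((‖z‖ : ℂ)) ^ (e - 1))).restrictScalars ℝ).comp
          (Complex.ofRealCLM.comp (‖z‖⁻¹ • ipCLM z))) z := by
    have := hzp.comp z hn
    exact this
  have hpow : HasFDerivAt (fun y : ℂ => y ^ (m + 1))
      ((ContinuousLinearMap.smulRight (1 : ℂ →L[ℂ] ℂ)
        (((m : ℂ) + 1) * z ^ m)).restrictScalars ℝ) z := by
    have := (hasDerivAt_pow (m + 1) z).hasFDerivAt.restrictScalars ℝ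
    refine this.congr_fderiv ?_
    ext
    simp
  refine ⟨_, hcomp.mul hpow, ?_⟩
  intro v
  -- evaluate the derivative
  simp only [ContinuousLinearMap.add_apply, ContinuousLinearMap.smul_apply,
    ContinuousLinearMap.coe_comp', Function.comp_apply,
    ContinuousLinearMap.coe_restrictScalars', ContinuousLinearMap.smulRight_apply,
    ContinuousLinearMap.one_apply, Complex.ofRealCLM_apply, ipCLM,
    ContinuousLinearMap.coe_smul', Pi.smul_apply, ContinuousLinearMap.add_apply,
    Complex.reCLM_apply, Complex.imCLM_apply, smul_eq_mul]
  set u := z / ((‖z‖ : ℝ) : ℂ) with hu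
  have h2 : Complex.normSq z = ‖z‖ * ‖z‖ := by
    rw [Complex.normSq_eq_norm_sq]; ring
  have hnu : u * (starRingEnd ℂ) u = 1 := by
    rw [Complex.mul_conj, hu, Complex.normSq_div, Complex.normSq_ofReal, h2]
    rw [div_self (by positivity)]
    norm_num
  have hcz : (starRingEnd ℂ) z = ((‖z‖ : ℝ) : ℂ) * (starRingEnd ℂ) u := by
    rw [hu, map_div₀, Complex.conj_ofReal]
    rw [mul_div_assoc']
    rw [mul_comm, mul_div_assoc, div_self hrC, mul_one]
  have h1 : z.re * v.re + z.im * v.im = ‖z‖ * ((starRingEnd ℂ) u * v).re := by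
    have hstep : z.re * v.re + z.im * v.im = ((starRingEnd ℂ) z * v).re := by
      simp [Complex.mul_re]
    rw [hstep, hcz, mul_assoc]
    simp
  rw [h1, inv_mul_cancel_left₀ hr0]
  set A := ((starRingEnd ℂ) u * v).re with hA
  set B := ((starRingEnd ℂ) u * v).im with hB
  have hv : v = u * ((A : ℂ) + (B : ℂ) * Complex.I) := by
    rw [hA, hB, Complex.re_add_im, ← mul_assoc, hnu, one_mul]
  have hzu : z = ((‖z‖ : ℝ) : ℂ) * u := by
    rw [hu, mul_div_assoc', mul_comm, mul_div_assoc, div_self hrC, mul_one]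
  have hem : ((e : ℤ) : ℂ) = -(m : ℂ) := by rw [hee]; push_cast; ring
  have hzpow : ∀ n : ℕ, z ^ n = (((‖z‖ : ℝ) : ℂ)) ^ n * u ^ n := fun n => by
    rw [← mul_pow, ← hzu]
  clear_value u
  rw [hem, hv, hzpow m, hzpow (m + 1)]
  rw [show e - 1 = -(((m + 1 : ℕ) : ℤ)) by omega, hee]
  rw [zpow_neg, zpow_natCast, zpow_neg, zpow_natCast]
  have hpm : (((‖z‖ : ℝ) : ℂ)) ^ m ≠ 0 := pow_ne_zero _ hrC
  have hpm1 : (((‖z‖ : ℝ) : ℂ)) ^ (m + 1) ≠ 0 := pow_ne_zero _ hrC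
  have habs : ((‖z‖ : ℝ) : ℂ) ≠ 0 := by
    exact hrC
  field_simp
  ring

/-- Lemma 3.5 of Bartolucci–Malchiodi: the Jacobian determinant of `Φ_k`, viewed
as a map of `ℝ^{2k}` (i.e. the determinant of its real Fréchet derivative), is
nonzero at every `w` with all `w_i ≠ 0` and pairwise distinct arguments
(`w_i/|w_i| ≠ w_j/|w_j|` for `i ≠ j`). -/
theorem stmt_4 (k : ℕ) (w : Fin k → ℂ) (h0 : ∀ i, w i ≠ 0)
    (harg : ∀ i j, i ≠ j → w i / (‖w i‖ : ℂ) ≠ w j / (‖w j‖ : ℂ)) :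
    LinearMap.det ((fderiv ℝ (PhiMap k) w).toLinearMap) ≠ 0 := by
  classical
  set u : Fin k → ℂ := fun i => w i / ((‖w i‖ : ℝ) : ℂ) with hudef
  have hu1 : ∀ i, ‖u i‖ = 1 := by
    intro i
    have h : ‖w i‖ ≠ 0 := norm_ne_zero_iff.mpr (h0 i)
    rw [hudef]
    simp only
    rw [norm_div, Complex.norm_real, norm_norm, div_self h]
  have hu0 : ∀ i, u i ≠ 0 := fun i => by
    intro h; have := hu1 i; rw [h] at this; simp at this
  have huinj : Function.Injective u := by
    intro i j hij
    by_contra hne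
    exact harg i j hne hij
  have hconj : ∀ i, u i * (starRingEnd ℂ) (u i) = 1 := by
    intro i
    rw [Complex.mul_conj]
    norm_cast
    rw [Complex.normSq_eq_norm_sq, hu1 i]
    norm_num
  -- the derivative in each coordinate
  choose D hD hDval using fun (i : Fin k) (m : ℕ) => gdiff m (w i) (h0 i)
  -- total derivative
  set Dtot : (Fin k → ℂ) →L[ℝ] (Fin k → ℂ) :=
    ContinuousLinearMap.pi (fun j : Fin k =>
      ∑ i, (D i (j : ℕ)).comp (ContinuousLinearMap.proj i)) with hDtot
  have hPsi : HasFDerivAt (fun w' : Fin k → ℂ => fun j : Fin k =>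
      ∑ i, ((‖w' i‖ : ℂ)) ^ ((1 : ℤ) - (((j : ℕ) : ℤ) + 1)) * w' i ^ ((j : ℕ) + 1))
      Dtot w := by
    rw [hDtot]
    apply hasFDerivAt_pi.mpr
    intro j
    apply HasFDerivAt.fun_sum
    intro i _
    have hproj : HasFDerivAt (fun y : Fin k → ℂ => y i)
        (ContinuousLinearMap.proj i : (Fin k → ℂ) →L[ℝ] ℂ) w :=
      (ContinuousLinearMap.proj i : (Fin k → ℂ) →L[ℝ] ℂ).hasFDerivAt
    exact (hD i (j : ℕ)).comp w hproj
  have hEq : PhiMap k =ᶠ[nhds w] (fun w' : Fin k → ℂ => fun j : Fin k =>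
      ∑ i, ((‖w' i‖ : ℂ)) ^ ((1 : ℤ) - (((j : ℕ) : ℤ) + 1)) * w' i ^ ((j : ℕ) + 1)) := by
    have hopen : ∀ᶠ w' in nhds w, ∀ i, w' i ≠ 0 := by
      rw [Filter.eventually_all]
      intro i
      exact (continuous_apply i).continuousAt.preimage_mem_nhds
        (isOpen_ne.mem_nhds (h0 i))
    filter_upwards [hopen] with w' hw'
    funext j
    unfold PhiMap
    exact Finset.sum_congr rfl fun i _ => by simp [hw' i]
  have hF : HasFDerivAt (PhiMap k) Dtot w := hPsi.congr_of_eventuallyEq hEq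
  rw [hF.fderiv]
  -- injectivity
  intro hdet
  obtain ⟨v, hvmem, hvne⟩ := SetLike.exists_of_lt (LinearMap.bot_lt_ker_of_det_eq_zero hdet)
  rw [Submodule.mem_bot] at hvne
  have hker : Dtot v = 0 := hvmem
  -- the basic equations
  set a : Fin k → ℝ := fun i => ((starRingEnd ℂ) (u i) * v i).re with hadef
  set b : Fin k → ℝ := fun i => ((starRingEnd ℂ) (u i) * v i).im with hbdef
  have E : ∀ m : ℕ, 1 ≤ m → m ≤ k →
      ∑ i, (((a i : ℝ) : ℂ) + Complex.I * (m : ℂ) * ((b i : ℝ) : ℂ)) * u i ^ m = 0 := by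
    intro m hm1 hmk
    set j : Fin k := ⟨m - 1, by omega⟩ with hjdef
    have hj : (j : ℕ) + 1 = m := by simp [hjdef]; omega
    have h1 : Dtot v j = 0 := by rw [hker]; rfl
    rw [hDtot] at h1
    simp only [ContinuousLinearMap.pi_apply, ContinuousLinearMap.sum_apply,
      ContinuousLinearMap.coe_comp', Function.comp_apply,
      ContinuousLinearMap.proj_apply] at h1
    calc ∑ i, (((a i : ℝ) : ℂ) + Complex.I * (m : ℂ) * ((b i : ℝ) : ℂ)) * u i ^ m
        = ∑ i, D i (j : ℕ) (v i) := by
          refine Finset.sum_congr rfl fun i _ => ?_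
          rw [hDval i (j : ℕ) (v i)]
          have hm' : m - 1 + 1 = m := by omega
          simp only [hadef, hbdef, hjdef, hm', hudef]
          rw [show ((m - 1 : ℕ) : ℂ) + 1 = (m : ℂ) by rw [Nat.cast_sub hm1]; push_cast; ring]
      _ = 0 := h1
  set A : Fin k → ℂ := fun i =>
    (((a i : ℝ) : ℂ) - Complex.I * (k : ℂ) * ((b i : ℝ) : ℂ)) * ((starRingEnd ℂ) (u i)) ^ k
    with hAdef
  set B : Fin k → ℂ := fun i =>
    Complex.I * ((b i : ℝ) : ℂ) * u i * ((starRingEnd ℂ) (u i)) ^ k with hBdef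
  have hcan : ∀ (i : Fin k) (n : ℕ), (starRingEnd ℂ) (u i) ^ n * u i ^ n = 1 := by
    intro i n
    rw [← mul_pow, mul_comm, hconj i, one_pow]
  have hcu0 : ∀ i, (starRingEnd ℂ) (u i) ≠ 0 := fun i => star_ne_zero.mpr (hu0 i)
  have hvan : ∀ n : ℕ, n ≤ 2 * k → n ≠ k →
      ∑ i, (A i * u i ^ n + B i * (n : ℂ) * u i ^ (n - 1)) = 0 := by
    intro n hn2 hnk
    rcases Nat.lt_or_ge n k with hlt | hge
    · -- n < k : use the conjugated equation with m = k - n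
      set m := k - n with hmdef
      have hm1 : 1 ≤ m := by omega
      have hmk : m ≤ k := by omega
      have hkm : k = n + m := by omega
      have hE := congrArg (starRingEnd ℂ) (E m hm1 hmk)
      rw [map_sum, map_zero] at hE
      rw [← hE]
      refine Finset.sum_congr rfl fun i _ => ?_
      rw [map_mul, map_add, map_mul, map_mul, map_pow]
      simp only [Complex.conj_ofReal, Complex.conj_I, map_natCast]
      have hcast : (m : ℂ) = (k : ℂ) - (n : ℂ) := by
        rw [hmdef, Nat.cast_sub (le_of_lt hlt)]
      have h2 : (starRingEnd ℂ) (u i) ^ k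
          = (starRingEnd ℂ) (u i) ^ n * (starRingEnd ℂ) (u i) ^ m := by
        rw [← pow_add, ← hkm]
      rcases Nat.eq_zero_or_pos n with hn0 | hn1
      · subst hn0
        have hmk' : m = k := by omega
        rw [hAdef, hBdef]
        simp only
        rw [← hmk', hcast]
        push_cast
        ring
      · have h1 : u i * u i ^ (n - 1) = u i ^ n := by
          rw [← pow_succ']
          congr 1
          omega
        have h3 := hcan i n
        rw [hAdef, hBdef]
        simp only
        rw [h2, hcast]
        linear_combination
          (((a i : ℝ) : ℂ) - Complex.I * (k : ℂ) * ((b i : ℝ) : ℂ)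
            + Complex.I * ((b i : ℝ) : ℂ) * (n : ℂ)) * ((starRingEnd ℂ) (u i)) ^ m * h3
          + Complex.I * ((b i : ℝ) : ℂ) * (n : ℂ) * ((starRingEnd ℂ) (u i)) ^ m
            * ((starRingEnd ℂ) (u i)) ^ n * h1
    · -- k < n : use the equation with m = n - k
      set m := n - k with hmdef
      have hm1 : 1 ≤ m := by omega
      have hmk : m ≤ k := by omega
      have hkm : n = k + m := by omega
      rw [← E m hm1 hmk]
      refine Finset.sum_congr rfl fun i _ => ?_
      have h4 : u i ^ n = u i ^ k * u i ^ m := by rw [hkm, pow_add]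
      have h5 : u i ^ (n - 1) = u i ^ k * u i ^ (m - 1) := by
        rw [show n - 1 = k + (m - 1) by omega, pow_add]
      have h6 : u i * u i ^ (m - 1) = u i ^ m := by
        rw [← pow_succ']
        congr 1
        omega
      have hcast : (m : ℂ) = (n : ℂ) - (k : ℂ) := by
        rw [hmdef, Nat.cast_sub (by omega)]
      have hck := hcan i k
      rw [hAdef, hBdef]
      simp only
      rw [h4, h5, hcast]
      linear_combination
        ((((a i : ℝ) : ℂ) - Complex.I * (k : ℂ) * ((b i : ℝ) : ℂ)) * u i ^ m
          + Complex.I * ((b i : ℝ) : ℂ) * (n : ℂ) * u i ^ m) * hck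
        + Complex.I * ((b i : ℝ) : ℂ) * (n : ℂ) * ((starRingEnd ℂ) (u i) ^ k * u i ^ k) * h6
  have hAB := key_lin u hu1 huinj A B hvan
  have hv0 : v = 0 := by
    funext i
    obtain ⟨hA0, hB0⟩ := hAB i
    rw [hAdef] at hA0
    rw [hBdef] at hB0
    simp only at hA0 hB0
    have hb0 : b i = 0 := by
      have := mul_eq_zero.mp hB0
      rcases this with h | h
      · rcases mul_eq_zero.mp h with h' | h'
        · rcases mul_eq_zero.mp h' with h'' | h''
          · exact absurd h'' Complex.I_ne_zero
          · exact_mod_cast h''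
        · exact absurd h' (hu0 i)
      · exact absurd h (pow_ne_zero _ (hcu0 i))
    have ha0 : a i = 0 := by
      rcases mul_eq_zero.mp hA0 with h | h
      · rw [hb0] at h
        push_cast at h
        simpa using h
      · exact absurd h (pow_ne_zero _ (hcu0 i))
    have hzero : (starRingEnd ℂ) (u i) * v i = 0 := by
      apply Complex.ext
      · simpa [hadef] using ha0
      · simpa [hbdef] using hb0
    rcases mul_eq_zero.mp hzero with h | h
    · exact absurd h (hcu0 i)
    · exact h
  exact hvne hv0
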